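/- Let R > 0 and 0 < c₁ ≤ c₂. Let Ẽ : [0,R] → ℝ be twice continuously differentiable with Ẽ′(0) = 0 and c₁ ≤ Ẽ″(u) ≤ c₂ for all u ∈ [0,R]. Then there is a constant c > 0 depending only on c₁ and c₂ such that for all p̄ > 0 and r > 0 with p̄ + r ≤ R, all t > 0, all ε ∈ (0,1], and every f : [0,π] × [0,2π] → ℂ which is continuous with continuous partial derivative ∂_θ f: |∫₀^{2π} ∫₀^{π} e^{−i Ẽ(√(p̄² − 2 p̄ r cosθ + r²)) t} f(θ,φ) sinθ dθ dφ| ≤ c · ( ε · sup|f| + (1/(p̄ r t ε)) · sup(|f| + |∂_θ f|) ), with suprema over [0,π]×[0,2π]. -/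

import Mathlib

set_option maxHeartbeats 2000000 in
open Real intervalIntegral in
lemma asp_inner (c₁ c₂ : ℝ) (hc₁ : 0 < c₁) (hc₁₂ : c₁ ≤ c₂) (R : ℝ)
    (E E' E'' : ℝ → ℝ)
    (hE : ∀ u ∈ Set.Icc (0:ℝ) R, HasDerivWithinAt E (E' u) (Set.Icc 0 R) u)
    (hE' : ∀ u ∈ Set.Icc (0:ℝ) R, HasDerivWithinAt E' (E'' u) (Set.Icc 0 R) u)
    (hE''c : ContinuousOn E'' (Set.Icc 0 R))
    (hE'0 : E' 0 = 0)
    (hbd : ∀ u ∈ Set.Icc (0:ℝ) R, c₁ ≤ E'' u ∧ E'' u ≤ c₂)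
    (pb r t ε : ℝ) (hpb : 0 < pb) (hr : 0 < r) (hpr : pb + r ≤ R) (ht : 0 < t)
    (hε : 0 < ε) (hε1 : ε ≤ 1)
    (u u' : ℝ → ℂ)
    (hu : ∀ θ ∈ Set.Icc (0:ℝ) π, HasDerivWithinAt u (u' θ) (Set.Icc 0 π) θ)
    (hu'c : ContinuousOn u' (Set.Icc 0 π))
    (B₀ B₁ : ℝ)
    (hB₀ : ∀ θ ∈ Set.Icc (0:ℝ) π, ‖u θ‖ ≤ B₀)
    (hB₁ : ∀ θ ∈ Set.Icc (0:ℝ) π, ‖u θ‖ + ‖u' θ‖ ≤ B₁) :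
    ‖∫ θ in (0:ℝ)..π, Complex.exp (-Complex.I *
        (E (Real.sqrt (pb ^ 2 - 2 * pb * r * Real.cos θ + r ^ 2)) : ℂ) * (t : ℂ)) *
        u θ * (Real.sin θ : ℂ)‖
      ≤ ε * B₀ + (6 + 5 * (c₂ - c₁) / c₁) / c₁ * (1 / (pb * r * t * ε)) * B₁ := by
  have hπ := Real.pi_gt_three
  have hπ' := Real.pi_lt_d2
  -- basic setup
  set δ : ℝ := Real.sqrt ε with hδdef
  have hδpos : 0 < δ := Real.sqrt_pos.2 hε
  have hδ1 : δ ≤ 1 := by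
    rw [hδdef, show (1:ℝ) = Real.sqrt 1 by simp]
    exact Real.sqrt_le_sqrt hε1
  have hδsq : δ ^ 2 = ε := Real.sq_sqrt hε.le
  have hδlt : δ < π - δ := by linarith
  have hB₁0 : 0 ≤ B₁ := le_trans (by positivity) (hB₁ 0 (by constructor <;> [rfl; positivity]))
  -- the inside function and its square root
  set q : ℝ → ℝ := fun θ => pb ^ 2 - 2 * pb * r * Real.cos θ + r ^ 2 with hqdef
  set s : ℝ → ℝ := fun θ => Real.sqrt (q θ) with hsdef
  have hq0 : ∀ θ, 0 ≤ q θ := fun θ => by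
    have h1 : 0 ≤ 2 * pb * r * (1 - Real.cos θ) :=
      mul_nonneg (by positivity) (by linarith [Real.cos_le_one θ])
    simp only [hqdef]; nlinarith [sq_nonneg (pb - r), h1]
  have hqle : ∀ θ, q θ ≤ (pb + r) ^ 2 := fun θ => by
    have h1 : 0 ≤ 2 * pb * r * (1 + Real.cos θ) :=
      mul_nonneg (by positivity) (by linarith [Real.neg_one_le_cos θ])
    simp only [hqdef]; nlinarith [h1]
  have hs0 : ∀ θ, 0 ≤ s θ := fun θ => Real.sqrt_nonneg _
  have hsle : ∀ θ, s θ ≤ R := fun θ => by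
    calc s θ ≤ Real.sqrt ((pb + r) ^ 2) := Real.sqrt_le_sqrt (hqle θ)
    _ = pb + r := by rw [Real.sqrt_sq (by positivity)]
    _ ≤ R := hpr
  have hsmem : ∀ θ, s θ ∈ Set.Icc (0:ℝ) R := fun θ => ⟨hs0 θ, hsle θ⟩
  have hEcont : ContinuousOn E (Set.Icc 0 R) := fun x hx => (hE x hx).continuousWithinAt
  have hE'cont : ContinuousOn E' (Set.Icc 0 R) := fun x hx => (hE' x hx).continuousWithinAt
  -- E' is between c₁ x and c₂ x
  have hE'le : ∀ x ∈ Set.Icc (0:ℝ) R, c₁ * x ≤ E' x ∧ E' x ≤ c₂ * x := by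
    intro x hx
    have h0R : (0:ℝ) ∈ Set.Icc (0:ℝ) R := ⟨le_refl _, by linarith [hx.1, hx.2]⟩
    constructor
    · have key := (convex_Icc (0:ℝ) R).norm_image_sub_le_of_norm_hasDerivWithin_le
        (f := fun y => c₂ * y - E' y) (f' := fun y => c₂ - E'' y) (C := c₂ - c₁)
        (fun y hy => by refine (((hasDerivWithinAt_id y (Set.Icc (0:ℝ) R)).const_mul c₂).sub (hE' y hy)).congr_deriv (Eq.symm ?_); ring)
        (fun y hy => by
          have hb := hbd y hy
          simp only [Real.norm_eq_abs]
          rw [abs_le]; constructor <;> linarith [hb.1, hb.2])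
        h0R hx
      simp only [hE'0, mul_zero, sub_zero, Real.norm_eq_abs] at key
      rw [abs_of_nonneg hx.1, abs_le] at key
      linarith [key.1]
    · have key := (convex_Icc (0:ℝ) R).norm_image_sub_le_of_norm_hasDerivWithin_le
        (f := E') (f' := E'') (C := c₂) hE'
        (fun y hy => by
          have hb := hbd y hy
          simp only [Real.norm_eq_abs]
          rw [abs_le]; constructor <;> linarith [hb.1, hb.2])
        h0R hx
      simp only [hE'0, sub_zero, Real.norm_eq_abs] at key
      rw [abs_of_nonneg hx.1, abs_le] at key
      linarith [key.2]
  -- facts on the middle interval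
  have hcosδ : 1 - Real.cos δ ≥ ε / 5 := by
    have h1 : Real.cos δ ≤ 1 - 2 / π ^ 2 * δ ^ 2 :=
      Real.cos_le_one_sub_mul_cos_sq (by rw [abs_of_nonneg hδpos.le]; linarith)
    have h2 : 2 / π ^ 2 ≥ 1 / 5 := by
      rw [ge_iff_le, div_le_div_iff₀ (by norm_num) (by positivity)]
      nlinarith
    nlinarith [hδsq]
  have hmid : ∀ θ ∈ Set.Icc δ (π - δ), 0 < θ ∧ θ < π ∧ 0 < Real.sin θ ∧
      2 * pb * r * (1 - Real.cos δ) ≤ q θ ∧ 0 < q θ ∧ 0 < s θ ∧ s θ < R ∧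
      (s θ) ^ 2 = q θ := by
    intro θ hθ
    have hθ0 : 0 < θ := lt_of_lt_of_le hδpos hθ.1
    have hθπ : θ < π := lt_of_le_of_lt hθ.2 (by linarith)
    have hsin : 0 < Real.sin θ := Real.sin_pos_of_pos_of_lt_pi hθ0 hθπ
    have hcos1 : Real.cos θ ≤ Real.cos δ :=
      Real.cos_le_cos_of_nonneg_of_le_pi hδpos.le hθπ.le hθ.1
    have hcos2 : Real.cos (π - δ) ≤ Real.cos θ :=
      Real.cos_le_cos_of_nonneg_of_le_pi hθ0.le (by linarith) hθ.2
    rw [Real.cos_pi_sub] at hcos2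
    have hqlb : 2 * pb * r * (1 - Real.cos δ) ≤ q θ := by
      have h1 : 0 ≤ 2 * pb * r * (Real.cos δ - Real.cos θ) :=
        mul_nonneg (by positivity) (by linarith)
      simp only [hqdef]; nlinarith [sq_nonneg (pb - r), h1]
    have hqpos : 0 < q θ :=
      lt_of_lt_of_le (mul_pos (by positivity) (by linarith)) hqlb
    have hspos : 0 < s θ := Real.sqrt_pos.2 hqpos
    have hsq : (s θ) ^ 2 = q θ := Real.sq_sqrt hqpos.le
    have hsltR : s θ < R := by
      have hq' : q θ < (pb + r) ^ 2 := by
        have h2 : 0 < 2 * pb * r * (1 + Real.cos θ) := mul_pos (by positivity) (by linarith)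
        simp only [hqdef]; nlinarith [h2]
      calc s θ < Real.sqrt ((pb + r) ^ 2) := by
            rw [hsdef]; exact Real.sqrt_lt_sqrt (hq0 θ) hq'
      _ = pb + r := by rw [Real.sqrt_sq (by positivity)]
      _ ≤ R := hpr
    exact ⟨hθ0, hθπ, hsin, hqlb, hqpos, hspos, hsltR, hsq⟩
  -- main definitions
  set h : ℝ → ℝ := fun θ => E' (s θ) / s θ with hhdef
  set Hd : ℝ → ℝ := fun θ =>
    (E'' (s θ) * (pb * r * Real.sin θ / s θ) * s θ -
      E' (s θ) * (pb * r * Real.sin θ / s θ)) / (s θ) ^ 2 with hHddef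
  set P : ℝ → ℂ := fun θ => Complex.exp (-Complex.I * (E (s θ) : ℂ) * (t : ℂ)) with hPdef
  set D : ℝ → ℂ := fun θ =>
    -Complex.I * (t : ℂ) * ((pb * r : ℝ) : ℂ) * ((h θ : ℝ) : ℂ) with hDdef
  set w : ℝ → ℂ := fun θ => u θ / D θ with hwdef
  set W : ℝ → ℂ := fun θ =>
    (u' θ * D θ - u θ * (-Complex.I * (t : ℂ) * ((pb * r : ℝ) : ℂ) * ((Hd θ : ℝ) : ℂ))) /
      (D θ) ^ 2 with hWdef
  set Φ : ℝ → ℂ := fun θ =>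
    Complex.exp (-Complex.I * (E (s θ) : ℂ) * (t : ℂ)) * u θ * (Real.sin θ : ℂ) with hΦdef
  -- norm of the phase is 1
  have hPnorm : ∀ θ, ‖P θ‖ = 1 := by
    intro θ
    rw [hPdef]
    simp only [Complex.norm_exp]
    have : (-Complex.I * (E (s θ) : ℂ) * (t : ℂ)).re = 0 := by
      simp [Complex.mul_re, Complex.mul_im]
    rw [this, Real.exp_zero]
  -- per-point facts on the middle interval
  have hmid2 : ∀ θ ∈ Set.Icc δ (π - δ),
      (c₁ ≤ h θ ∧ h θ ≤ c₂) ∧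
      |Hd θ| ≤ (c₂ - c₁) * (pb * r * Real.sin θ / q θ) ∧
      HasDerivAt (fun x => P x * w x) (Φ θ + P θ * W θ) θ ∧
      HasDerivAt (fun x => Real.log (q x) / 2) (pb * r * Real.sin θ / q θ) θ := by
    intro θ hθ
    obtain ⟨hθ0, hθπ, hsin, hqlb, hqpos, hspos, hsltR, hsq⟩ := hmid θ hθ
    have hsne : s θ ≠ 0 := ne_of_gt hspos
    have hE's' := hE'le (s θ) (hsmem θ)
    have hc₁h : c₁ ≤ h θ := by
      rw [hhdef]
      rw [le_div_iff₀ hspos]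
      exact hE's'.1
    have hhc₂ : h θ ≤ c₂ := by
      rw [hhdef]
      rw [div_le_iff₀ hspos]
      exact hE's'.2
    have hhpos : 0 < h θ := lt_of_lt_of_le hc₁ hc₁h
    -- derivative of q
    have hqd : HasDerivAt q (2 * pb * r * Real.sin θ) θ := by
      have h3 := (((Real.hasDerivAt_cos θ).const_mul (2 * pb * r)).const_sub (pb ^ 2)).add_const (r ^ 2)
      rw [hqdef]
      refine h3.congr_deriv (Eq.symm ?_)
      ring
    -- derivative of s
    have hsd : HasDerivAt s (pb * r * Real.sin θ / s θ) θ := by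
      have h1 := (Real.hasDerivAt_sqrt (ne_of_gt hqpos)).comp θ hqd
      rw [hsdef]
      refine h1.congr_deriv (Eq.symm ?_)
      rw [show Real.sqrt (q θ) = s θ from rfl]
      field_simp
      ring
    -- derivatives of E, E' at s θ
    have hEat : HasDerivAt E (E' (s θ)) (s θ) :=
      (hE (s θ) (hsmem θ)).hasDerivAt (Icc_mem_nhds hspos hsltR)
    have hE'at : HasDerivAt E' (E'' (s θ)) (s θ) :=
      (hE' (s θ) (hsmem θ)).hasDerivAt (Icc_mem_nhds hspos hsltR)
    have hEs : HasDerivAt (fun x => E (s x)) (E' (s θ) * (pb * r * Real.sin θ / s θ)) θ :=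
      hEat.comp θ hsd
    have hE's : HasDerivAt (fun x => E' (s x)) (E'' (s θ) * (pb * r * Real.sin θ / s θ)) θ :=
      hE'at.comp θ hsd
    -- derivative of h
    have hhd : HasDerivAt h (Hd θ) θ := by
      have h1 := hE's.div hsd hsne
      rw [hhdef, hHddef]
      exact h1
    -- bound on Hd
    have hEbd := hbd (s θ) (hsmem θ)
    have hHdbd : |Hd θ| ≤ (c₂ - c₁) * (pb * r * Real.sin θ / q θ) := by
      have hnum : |E'' (s θ) * s θ - E' (s θ)| ≤ (c₂ - c₁) * s θ := by
        rw [abs_le]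
        constructor
        · nlinarith [hE's'.2, hEbd.1, hspos.le]
        · nlinarith [hE's'.1, hEbd.2, hspos.le]
      have hHdeq : Hd θ =
          pb * r * Real.sin θ * (E'' (s θ) * s θ - E' (s θ)) / (q θ * s θ) := by
        rw [hHddef, ← hsq]
        field_simp
      rw [hHdeq, abs_div, abs_mul]
      rw [abs_of_pos (by positivity : (0:ℝ) < pb * r * Real.sin θ),
        abs_of_pos (by positivity : (0:ℝ) < q θ * s θ)]
      calc pb * r * Real.sin θ * |E'' (s θ) * s θ - E' (s θ)| / (q θ * s θ)
          ≤ pb * r * Real.sin θ * ((c₂ - c₁) * s θ) / (q θ * s θ) := by gcongr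
        _ = (c₂ - c₁) * (pb * r * Real.sin θ / q θ) := by field_simp
    -- derivative of P
    have hinner : HasDerivAt (fun x => -Complex.I * (E (s x) : ℂ) * (t : ℂ))
        (-Complex.I * ((E' (s θ) * (pb * r * Real.sin θ / s θ) : ℝ) : ℂ) * (t : ℂ)) θ := by
      have h1 := hEs.ofReal_comp
      exact (h1.const_mul (-Complex.I)).mul_const (t : ℂ)
    have hPd : HasDerivAt P
        (P θ * (-Complex.I * ((E' (s θ) * (pb * r * Real.sin θ / s θ) : ℝ) : ℂ) * (t : ℂ))) θ := by
      have h2 := hinner.cexp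
      rw [hPdef]
      convert h2 using 1
    -- derivative of D
    have hDd : HasDerivAt D
        (-Complex.I * (t : ℂ) * ((pb * r : ℝ) : ℂ) * ((Hd θ : ℝ) : ℂ)) θ := by
      have h1 := hhd.ofReal_comp
      have h2 := h1.const_mul (-Complex.I * (t : ℂ) * ((pb * r : ℝ) : ℂ))
      rw [hDdef]
      convert h2 using 1
    have hDne : D θ ≠ 0 := by
      rw [hDdef]
      apply mul_ne_zero
      apply mul_ne_zero
      apply mul_ne_zero
      · exact neg_ne_zero.2 Complex.I_ne_zero
      · exact_mod_cast ht.ne'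
      · exact_mod_cast (by positivity : (0:ℝ) < pb * r).ne'
      · exact_mod_cast hhpos.ne'
    -- derivative of u
    have hud : HasDerivAt u (u' θ) θ :=
      (hu θ ⟨hθ0.le, hθπ.le⟩).hasDerivAt (Icc_mem_nhds hθ0 hθπ)
    have hwd : HasDerivAt w (W θ) θ := by
      have h1 := hud.div hDd hDne
      rw [hwdef, hWdef]
      exact h1
    -- derivative of the antiderivative F
    have hFd : HasDerivAt (fun x => P x * w x) (Φ θ + P θ * W θ) θ := by
      have hmul := hPd.mul hwd
      refine hmul.congr_deriv (Eq.symm ?_)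
      have hareal : E' (s θ) * (pb * r * Real.sin θ / s θ) =
          Real.sin θ * (pb * r) * h θ := by
        rw [hhdef]; field_simp; try ring
      have hDne' : -Complex.I * (t : ℂ) * ((pb * r : ℝ) : ℂ) * ((h θ : ℝ) : ℂ) ≠ 0 := by
        apply mul_ne_zero
        apply mul_ne_zero
        apply mul_ne_zero
        · exact neg_ne_zero.2 Complex.I_ne_zero
        · exact_mod_cast ht.ne'
        · exact_mod_cast (by positivity : (0:ℝ) < pb * r).ne'
        · exact_mod_cast hhpos.ne'
      congr 1
      simp only [hΦdef, hwdef, hDdef, hPdef]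
      rw [hareal, Complex.ofReal_mul, Complex.ofReal_mul]
      rw [← mul_div_assoc, eq_div_iff hDne']
      ring
    -- derivative of the log antiderivative
    have hlogd : HasDerivAt (fun x => Real.log (q x) / 2) (pb * r * Real.sin θ / q θ) θ := by
      have h1 := ((Real.hasDerivAt_log (ne_of_gt hqpos)).comp θ hqd).div_const 2
      refine h1.congr_deriv (Eq.symm ?_)
      field_simp
    exact ⟨⟨hc₁h, hhc₂⟩, hHdbd, hFd, hlogd⟩
  -- continuity facts
  have hqcont : Continuous q := by rw [hqdef]; continuity
  have hscont : Continuous s := by rw [hsdef]; exact Real.continuous_sqrt.comp hqcont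
  have hucont : ContinuousOn u (Set.Icc 0 π) := fun x hx => (hu x hx).continuousWithinAt
  have hsmaps : ∀ (A : Set ℝ), Set.MapsTo s A (Set.Icc 0 R) := fun A x _ => hsmem x
  have hPcont : ContinuousOn P (Set.Icc 0 π) := by
    rw [hPdef]
    exact Complex.continuous_exp.comp_continuousOn
      ((continuousOn_const.mul (Complex.continuous_ofReal.comp_continuousOn
        (hEcont.comp hscont.continuousOn (hsmaps _)))).mul continuousOn_const)
  have hΦcont : ContinuousOn Φ (Set.Icc 0 π) := by
    rw [hΦdef]
    exact ((Complex.continuous_exp.comp_continuousOn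
      ((continuousOn_const.mul (Complex.continuous_ofReal.comp_continuousOn
        (hEcont.comp hscont.continuousOn (hsmaps _)))).mul continuousOn_const)).mul
          hucont).mul ((Complex.continuous_ofReal.comp Real.continuous_sin).continuousOn)
  have hMsub : Set.Icc δ (π - δ) ⊆ Set.Icc 0 π :=
    Set.Icc_subset_Icc (by linarith) (by linarith)
  have hsneM : ∀ θ ∈ Set.Icc δ (π - δ), s θ ≠ 0 :=
    fun θ hθ => (hmid θ hθ).2.2.2.2.2.1.ne'
  have hhcontM : ContinuousOn h (Set.Icc δ (π - δ)) := by
    rw [hhdef]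
    exact (hE'cont.comp hscont.continuousOn (hsmaps _)).div hscont.continuousOn hsneM
  have hHdcontM : ContinuousOn Hd (Set.Icc δ (π - δ)) := by
    rw [hHddef]
    apply ContinuousOn.div
    · apply ContinuousOn.sub
      · exact ((hE''c.comp hscont.continuousOn (hsmaps _)).mul
          (((continuous_const.mul Real.continuous_sin).continuousOn).div
            hscont.continuousOn hsneM)).mul hscont.continuousOn
      · exact (hE'cont.comp hscont.continuousOn (hsmaps _)).mul
          (((continuous_const.mul Real.continuous_sin).continuousOn).div
            hscont.continuousOn hsneM)
    · exact (hscont.continuousOn).pow 2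
    · exact fun θ hθ => pow_ne_zero 2 (hsneM θ hθ)
  have hDcontM : ContinuousOn D (Set.Icc δ (π - δ)) := by
    rw [hDdef]
    exact continuousOn_const.mul (Complex.continuous_ofReal.comp_continuousOn hhcontM)
  have hDneM : ∀ θ ∈ Set.Icc δ (π - δ), D θ ≠ 0 := by
    intro θ hθ
    have hhpos : 0 < h θ := lt_of_lt_of_le hc₁ ((hmid2 θ hθ).1.1)
    rw [hDdef]
    apply mul_ne_zero
    apply mul_ne_zero
    apply mul_ne_zero
    · exact neg_ne_zero.2 Complex.I_ne_zero
    · exact_mod_cast ht.ne'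
    · exact_mod_cast (by positivity : (0:ℝ) < pb * r).ne'
    · exact_mod_cast hhpos.ne'
  have hWcontM : ContinuousOn W (Set.Icc δ (π - δ)) := by
    rw [hWdef]
    apply ContinuousOn.div
    · apply ContinuousOn.sub
      · exact (hu'c.mono hMsub).mul hDcontM
      · exact (hucont.mono hMsub).mul (continuousOn_const.mul
          (Complex.continuous_ofReal.comp_continuousOn hHdcontM))
    · exact hDcontM.pow 2
    · exact fun θ hθ => pow_ne_zero 2 (hDneM θ hθ)
  have hPWcontM : ContinuousOn (fun θ => P θ * W θ) (Set.Icc δ (π - δ)) :=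
    (hPcont.mono hMsub).mul hWcontM
  -- integrability
  have hsub : Set.uIcc δ (π - δ) = Set.Icc δ (π - δ) := Set.uIcc_of_le hδlt.le
  have hΦI : ∀ a b : ℝ, 0 ≤ a → a ≤ b → b ≤ π →
      IntervalIntegrable Φ MeasureTheory.volume a b := by
    intro a b ha hab hb
    apply ContinuousOn.intervalIntegrable
    rw [Set.uIcc_of_le hab]
    exact hΦcont.mono (Set.Icc_subset_Icc ha hb)
  have hPWI : IntervalIntegrable (fun θ => P θ * W θ) MeasureTheory.volume δ (π - δ) := by
    apply ContinuousOn.intervalIntegrable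
    rw [hsub]
    exact hPWcontM
  have hΦIM : IntervalIntegrable Φ MeasureTheory.volume δ (π - δ) :=
    hΦI δ (π - δ) hδpos.le hδlt.le (by linarith)
  -- integration by parts
  have hibp : ∫ θ in δ..(π - δ), (Φ θ + P θ * W θ) =
      P (π - δ) * w (π - δ) - P δ * w δ := by
    apply intervalIntegral.integral_eq_sub_of_hasDerivAt
      (f := fun x => P x * w x) (f' := fun θ => Φ θ + P θ * W θ)
    · intro x hx
      rw [hsub] at hx
      exact (hmid2 x hx).2.2.1
    · exact hΦIM.add hPWI
  have hmidint : ∫ θ in δ..(π - δ), Φ θ =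
      (P (π - δ) * w (π - δ) - P δ * w δ) - ∫ θ in δ..(π - δ), P θ * W θ := by
    apply eq_sub_of_add_eq
    rw [← intervalIntegral.integral_add hΦIM hPWI]
    exact hibp
  -- FTC for the logarithmic integral
  have hqposM : ∀ θ ∈ Set.Icc δ (π - δ), 0 < q θ := fun θ hθ => (hmid θ hθ).2.2.2.2.1
  have hlog : ∫ θ in δ..(π - δ), pb * r * Real.sin θ / q θ =
      Real.log (q (π - δ)) / 2 - Real.log (q δ) / 2 := by
    apply intervalIntegral.integral_eq_sub_of_hasDerivAt
      (f := fun x => Real.log (q x) / 2) (f' := fun θ => pb * r * Real.sin θ / q θ)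
    · intro x hx
      rw [hsub] at hx
      exact (hmid2 x hx).2.2.2
    · apply ContinuousOn.intervalIntegrable
      rw [hsub]
      exact ((continuous_const.mul Real.continuous_sin).continuousOn).div
        hqcont.continuousOn (fun θ hθ => (hqposM θ hθ).ne')
  -- bound the log difference
  have hδmem : δ ∈ Set.Icc δ (π - δ) := ⟨le_rfl, hδlt.le⟩
  have hπδmem : (π - δ) ∈ Set.Icc δ (π - δ) := ⟨hδlt.le, le_rfl⟩
  have hlogbd : Real.log (q (π - δ)) / 2 - Real.log (q δ) / 2 ≤ 5 / ε := by
    have hqδpos : 0 < q δ := hqposM δ hδmem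
    have hqπδpos : 0 < q (π - δ) := hqposM (π - δ) hπδmem
    have h2 : (pb - r) ^ 2 + 2 * pb * r * (ε / 5) ≤ q δ := by
      have h3 : 0 ≤ 2 * pb * r * ((1 - Real.cos δ) - ε / 5) :=
        mul_nonneg (by positivity) (by linarith)
      simp only [hqdef]; nlinarith [h3]
    have h4 : ε * q (π - δ) ≤ ε * (pb + r) ^ 2 :=
      mul_le_mul_of_nonneg_left (hqle _) hε.le
    have hkey : ε * q (π - δ) ≤ 10 * q δ := by
      simp only [hqdef] at h2 h4 ⊢
      nlinarith [h2, h4, mul_nonneg (by linarith : (0:ℝ) ≤ 10 - ε) (sq_nonneg (pb - r)),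
        mul_pos hpb hr]
    have h5 : q (π - δ) ≤ 10 / ε * q δ := by
      rw [div_mul_eq_mul_div, le_div_iff₀ hε]
      linarith [hkey]
    have h6 : Real.log (q (π - δ)) ≤ Real.log (10 / ε) + Real.log (q δ) := by
      rw [← Real.log_mul (by positivity) hqδpos.ne']
      exact Real.log_le_log hqπδpos h5
    have h7 : Real.log (10 / ε) ≤ 10 / ε - 1 := Real.log_le_sub_one_of_pos (by positivity)
    have h8 : (10 / ε) / 2 = 5 / ε := by ring
    linarith
  -- norm of Φ
  have hΦnorm : ∀ θ, ‖Φ θ‖ = ‖u θ‖ * |Real.sin θ| := by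
    intro θ
    simp only [hΦdef]
    rw [norm_mul, norm_mul,
      show ‖Complex.exp (-Complex.I * (E (s θ) : ℂ) * (t : ℂ))‖ = 1 from hPnorm θ,
      Complex.norm_real, Real.norm_eq_abs]
    ring
  -- identify the goal integrand with Φ
  have hgoal : (∫ θ in (0:ℝ)..π, Complex.exp (-Complex.I *
      (E (Real.sqrt (pb ^ 2 - 2 * pb * r * Real.cos θ + r ^ 2)) : ℂ) * (t : ℂ)) *
      u θ * (Real.sin θ : ℂ)) = ∫ θ in (0:ℝ)..π, Φ θ := rfl
  -- boundary terms
  have hDnorm : ∀ θ ∈ Set.Icc δ (π - δ), ‖D θ‖ = t * (pb * r) * h θ := by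
    intro θ hθ
    have hhpos : 0 < h θ := lt_of_lt_of_le hc₁ ((hmid2 θ hθ).1.1)
    simp only [hDdef]
    simp only [norm_mul, norm_neg, Complex.norm_I, Complex.norm_real, Real.norm_eq_abs, one_mul]
    rw [abs_of_pos ht, abs_of_pos hpb, abs_of_pos hr, abs_of_pos hhpos]
  have hB₁b : ∀ θ ∈ Set.Icc (0:ℝ) π, ‖u θ‖ ≤ B₁ ∧ ‖u' θ‖ ≤ B₁ := by
    intro θ hθ
    have h1 := hB₁ θ hθ
    have h2 := norm_nonneg (u θ)
    have h3 := norm_nonneg (u' θ)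
    exact ⟨by linarith, by linarith⟩
  have hwnorm : ∀ θ ∈ Set.Icc δ (π - δ), ‖P θ * w θ‖ ≤ B₁ / (t * (pb * r) * c₁) := by
    intro θ hθ
    have hh1 : c₁ ≤ h θ := (hmid2 θ hθ).1.1
    have hhpos : 0 < h θ := lt_of_lt_of_le hc₁ hh1
    have hub : ‖u θ‖ ≤ B₁ := (hB₁b θ (hMsub hθ)).1
    calc ‖P θ * w θ‖ = ‖u θ‖ / (t * (pb * r) * h θ) := by
          rw [norm_mul, hPnorm θ, one_mul]
          simp only [hwdef]
          rw [norm_div, hDnorm θ hθ]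
      _ ≤ B₁ / (t * (pb * r) * c₁) := by
          apply div_le_div₀ hB₁0 hub (by positivity)
          exact mul_le_mul_of_nonneg_left hh1 (by positivity)
  -- pointwise bound on P * W
  have hPWbd : ∀ θ ∈ Set.Icc δ (π - δ), ‖P θ * W θ‖ ≤
      B₁ / (t * (pb * r) * c₁) +
        B₁ * (c₂ - c₁) / (t * (pb * r) * c₁ ^ 2) * (pb * r * Real.sin θ / q θ) := by
    intro θ hθ
    obtain ⟨⟨hh1, hh2⟩, hHdb, -, -⟩ := hmid2 θ hθ
    have hhpos : 0 < h θ := lt_of_lt_of_le hc₁ hh1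
    have hsin : 0 < Real.sin θ := (hmid θ hθ).2.2.1
    have hqpos : 0 < q θ := (hmid θ hθ).2.2.2.2.1
    have hub : ‖u θ‖ ≤ B₁ := (hB₁b θ (hMsub hθ)).1
    have hu'b : ‖u' θ‖ ≤ B₁ := (hB₁b θ (hMsub hθ)).2
    have hD'norm : ‖-Complex.I * (t : ℂ) * ((pb * r : ℝ) : ℂ) * ((Hd θ : ℝ) : ℂ)‖ =
        t * (pb * r) * |Hd θ| := by
      simp only [norm_mul, norm_neg, Complex.norm_I, Complex.norm_real, Real.norm_eq_abs, one_mul]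
      rw [abs_of_pos ht, abs_of_pos hpb, abs_of_pos hr]
    rw [norm_mul, hPnorm θ, one_mul]
    simp only [hWdef]
    rw [norm_div, norm_pow, hDnorm θ hθ]
    have hnum : ‖u' θ * D θ - u θ * (-Complex.I * (t : ℂ) * ((pb * r : ℝ) : ℂ) *
        ((Hd θ : ℝ) : ℂ))‖ ≤ B₁ * (t * (pb * r) * h θ) + B₁ * (t * (pb * r) * |Hd θ|) := by
      refine le_trans (norm_sub_le _ _) ?_
      rw [norm_mul (u' θ) (D θ),
        norm_mul (u θ) (-Complex.I * (t : ℂ) * ((pb * r : ℝ) : ℂ) * ((Hd θ : ℝ) : ℂ)),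
        hDnorm θ hθ, hD'norm]
      apply add_le_add
      · exact mul_le_mul_of_nonneg_right hu'b (by positivity)
      · exact mul_le_mul_of_nonneg_right hub (by positivity)
    have hstep1 : ‖u' θ * D θ - u θ * (-Complex.I * (t : ℂ) * ((pb * r : ℝ) : ℂ) *
        ((Hd θ : ℝ) : ℂ))‖ / (t * (pb * r) * h θ) ^ 2 ≤
        (B₁ * (t * (pb * r) * h θ) + B₁ * (t * (pb * r) * |Hd θ|)) /
          (t * (pb * r) * h θ) ^ 2 := by
      exact (div_le_div_iff_of_pos_right (by positivity)).mpr hnum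
    refine le_trans hstep1 ?_
    rw [add_div]
    apply add_le_add
    · have e1 : B₁ * (t * (pb * r) * h θ) / (t * (pb * r) * h θ) ^ 2 =
          B₁ / (t * (pb * r) * h θ) := by
        rw [sq]
        rw [mul_div_mul_right _ _ (by positivity : t * (pb * r) * h θ ≠ 0)]
      rw [e1]
      apply div_le_div₀ hB₁0 le_rfl (by positivity)
      exact mul_le_mul_of_nonneg_left hh1 (by positivity)
    · have e2 : B₁ * (t * (pb * r) * |Hd θ|) / (t * (pb * r) * h θ) ^ 2 =
          B₁ * |Hd θ| / (t * (pb * r) * h θ ^ 2) := by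
        field_simp
      rw [e2]
      have e3 : B₁ * (c₂ - c₁) / (t * (pb * r) * c₁ ^ 2) * (pb * r * Real.sin θ / q θ) =
          B₁ * ((c₂ - c₁) * (pb * r * Real.sin θ / q θ)) / (t * (pb * r) * c₁ ^ 2) := by
        field_simp
      rw [e3]
      apply div_le_div₀
        (mul_nonneg hB₁0 (mul_nonneg (by linarith) (by positivity)))
        (mul_le_mul_of_nonneg_left hHdb hB₁0) (by positivity)
      have : c₁ ^ 2 ≤ h θ ^ 2 := by nlinarith [hh1, hc₁]
      exact mul_le_mul_of_nonneg_left this (by positivity)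
  -- integrability of the bound G
  have hGI : IntervalIntegrable (fun θ => B₁ / (t * (pb * r) * c₁) +
      B₁ * (c₂ - c₁) / (t * (pb * r) * c₁ ^ 2) * (pb * r * Real.sin θ / q θ))
      MeasureTheory.volume δ (π - δ) := by
    apply ContinuousOn.intervalIntegrable
    rw [hsub]
    apply ContinuousOn.add continuousOn_const
    apply ContinuousOn.mul continuousOn_const
    exact ((continuous_const.mul Real.continuous_sin).continuousOn).div
      hqcont.continuousOn (fun θ hθ => (hqposM θ hθ).ne')
  have hPWn : ‖∫ θ in δ..(π - δ), P θ * W θ‖ ≤ |∫ θ in δ..(π - δ),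
      (B₁ / (t * (pb * r) * c₁) +
       B₁ * (c₂ - c₁) / (t * (pb * r) * c₁ ^ 2) * (pb * r * Real.sin θ / q θ))| := by
    refine le_trans (intervalIntegral.norm_integral_le_of_norm_le hδlt.le ?_ hGI) (le_abs_self _)
    filter_upwards with x hx
    have hx' : x ∈ Set.Icc δ (π - δ) := by
      exact ⟨hx.1.le, hx.2⟩
    exact hPWbd x hx'
  have hGval : (∫ θ in δ..(π - δ),
      (B₁ / (t * (pb * r) * c₁) +
       B₁ * (c₂ - c₁) / (t * (pb * r) * c₁ ^ 2) * (pb * r * Real.sin θ / q θ))) =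
      B₁ / (t * (pb * r) * c₁) * (π - δ - δ) +
      B₁ * (c₂ - c₁) / (t * (pb * r) * c₁ ^ 2) *
        (Real.log (q (π - δ)) / 2 - Real.log (q δ) / 2) := by
    rw [intervalIntegral.integral_add (intervalIntegrable_const) ?_]
    · rw [intervalIntegral.integral_const_mul, hlog, intervalIntegral.integral_const]
      simp only [smul_eq_mul]
      ring
    · apply ContinuousOn.intervalIntegrable
      rw [hsub]
      exact continuousOn_const.mul
        (((continuous_const.mul Real.continuous_sin).continuousOn).div
          hqcont.continuousOn (fun θ hθ => (hqposM θ hθ).ne'))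
  have hA0 : 0 ≤ B₁ / (t * (pb * r) * c₁) := by positivity
  have hK0 : 0 ≤ B₁ * (c₂ - c₁) / (t * (pb * r) * c₁ ^ 2) :=
    div_nonneg (mul_nonneg hB₁0 (by linarith)) (by positivity)
  -- the log difference is nonnegative
  have hcosδnn : 0 ≤ Real.cos δ :=
    Real.cos_nonneg_of_mem_Icc ⟨by linarith, by linarith⟩
  have hqmono : q δ ≤ q (π - δ) := by
    have hc : Real.cos (π - δ) = -Real.cos δ := Real.cos_pi_sub δ
    simp only [hqdef]
    rw [hc]
    nlinarith [mul_pos hpb hr, hcosδnn]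
  have hL0 : 0 ≤ Real.log (q (π - δ)) / 2 - Real.log (q δ) / 2 := by
    have := Real.log_le_log (hqposM δ hδmem) hqmono
    linarith
  -- bound on the middle piece
  have hmidn : ‖∫ θ in δ..(π - δ), Φ θ‖ ≤ 2 * (B₁ / (t * (pb * r) * c₁)) +
      (B₁ / (t * (pb * r) * c₁) * π +
       B₁ * (c₂ - c₁) / (t * (pb * r) * c₁ ^ 2) * (5 / ε)) := by
    rw [hmidint]
    have h1 := hwnorm (π - δ) hπδmem
    have h2 := hwnorm δ hδmem
    have h3 := hPWn
    rw [hGval, abs_of_nonneg (add_nonneg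
      (mul_nonneg hA0 (by linarith)) (mul_nonneg hK0 hL0))] at h3
    have h4 : B₁ / (t * (pb * r) * c₁) * (π - δ - δ) ≤
        B₁ / (t * (pb * r) * c₁) * π :=
      mul_le_mul_of_nonneg_left (by linarith) hA0
    have h5 : B₁ * (c₂ - c₁) / (t * (pb * r) * c₁ ^ 2) *
        (Real.log (q (π - δ)) / 2 - Real.log (q δ) / 2) ≤
        B₁ * (c₂ - c₁) / (t * (pb * r) * c₁ ^ 2) * (5 / ε) :=
      mul_le_mul_of_nonneg_left hlogbd hK0
    refine le_trans (norm_sub_le _ _) ?_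
    refine le_trans (add_le_add (norm_sub_le _ _) le_rfl) ?_
    linarith
  -- edge pieces
  have hB₀0 : 0 ≤ B₀ := le_trans (norm_nonneg _) (hB₀ 0 ⟨le_rfl, by positivity⟩)
  have hedge : ∀ a b : ℝ, 0 ≤ a → a ≤ b → b ≤ π →
      ‖∫ θ in a..b, Φ θ‖ ≤ |∫ θ in a..b, B₀ * Real.sin θ| := by
    intro a b ha hab hb
    refine le_trans (intervalIntegral.norm_integral_le_of_norm_le hab ?_ ?_) (le_abs_self _)
    · filter_upwards with x hx
      have hx0 : 0 ≤ x := le_trans ha hx.1.le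
      have hxπ : x ≤ π := le_trans hx.2 hb
      have hsn : 0 ≤ Real.sin x := Real.sin_nonneg_of_nonneg_of_le_pi hx0 hxπ
      rw [hΦnorm x, abs_of_nonneg hsn]
      exact mul_le_mul_of_nonneg_right (hB₀ x ⟨hx0, hxπ⟩) hsn
    · exact (continuous_const.mul Real.continuous_sin).intervalIntegrable _ _
  have hsin1 : (∫ θ in (0:ℝ)..δ, B₀ * Real.sin θ) = B₀ * (1 - Real.cos δ) := by
    rw [intervalIntegral.integral_const_mul, integral_sin, Real.cos_zero]
  have hsin2 : (∫ θ in (π - δ)..π, B₀ * Real.sin θ) = B₀ * (1 - Real.cos δ) := by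
    rw [intervalIntegral.integral_const_mul, integral_sin, Real.cos_pi, Real.cos_pi_sub]
    ring
  have hcosub : 1 - Real.cos δ ≤ ε / 2 := by
    have := Real.one_sub_sq_div_two_le_cos (x := δ)
    nlinarith [hδsq]
  have hcosnn : 0 ≤ 1 - Real.cos δ := by linarith [Real.cos_le_one δ]
  have he1 : ‖∫ θ in (0:ℝ)..δ, Φ θ‖ ≤ B₀ * (ε / 2) := by
    refine le_trans (hedge 0 δ le_rfl hδpos.le (by linarith)) ?_
    rw [hsin1, abs_of_nonneg (mul_nonneg hB₀0 hcosnn)]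
    exact mul_le_mul_of_nonneg_left hcosub hB₀0
  have he2 : ‖∫ θ in (π - δ)..π, Φ θ‖ ≤ B₀ * (ε / 2) := by
    refine le_trans (hedge (π - δ) π (by linarith) (by linarith) le_rfl) ?_
    rw [hsin2, abs_of_nonneg (mul_nonneg hB₀0 hcosnn)]
    exact mul_le_mul_of_nonneg_left hcosub hB₀0
  -- splitting the integral
  have e1 := intervalIntegral.integral_add_adjacent_intervals
    (hΦI 0 δ le_rfl hδpos.le (by linarith)) (hΦI δ (π - δ) hδpos.le hδlt.le (by linarith))
  have e2 := intervalIntegral.integral_add_adjacent_intervals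
    (hΦI 0 (π - δ) le_rfl (by linarith) (by linarith))
    (hΦI (π - δ) π (by linarith) (by linarith) le_rfl)
  rw [hgoal, ← e2, ← e1]
  -- final numeric assembly
  have hεT : t * (pb * r) * c₁ * ε ≤ t * (pb * r) * c₁ :=
    mul_le_of_le_one_right (by positivity) hε1
  have hX : B₁ / (t * (pb * r) * c₁) ≤ B₁ / (t * (pb * r) * c₁ * ε) :=
    div_le_div₀ hB₁0 le_rfl (by positivity) hεT
  have hp1 : 2 * (B₁ / (t * (pb * r) * c₁)) ≤ 2 * (B₁ / (t * (pb * r) * c₁ * ε)) := by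
    linarith
  have hp2 : B₁ / (t * (pb * r) * c₁) * π ≤ 4 * (B₁ / (t * (pb * r) * c₁ * ε)) := by
    have h1 : B₁ / (t * (pb * r) * c₁) * π ≤ B₁ / (t * (pb * r) * c₁) * 4 :=
      mul_le_mul_of_nonneg_left (by linarith) hA0
    linarith
  have hp3 : B₁ * (c₂ - c₁) / (t * (pb * r) * c₁ ^ 2) * (5 / ε) =
      5 * (c₂ - c₁) * (B₁ / (t * (pb * r) * c₁ ^ 2 * ε)) := by
    field_simp
  have hRHS : (6 + 5 * (c₂ - c₁) / c₁) / c₁ * (1 / (pb * r * t * ε)) * B₁ =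
      6 * (B₁ / (t * (pb * r) * c₁ * ε)) +
      5 * (c₂ - c₁) * (B₁ / (t * (pb * r) * c₁ ^ 2 * ε)) := by
    field_simp
  rw [hRHS]
  refine le_trans (norm_add_le _ _) ?_
  refine le_trans (add_le_add (norm_add_le _ _) le_rfl) ?_
  linarith [he1, he2, hmidn, hp1, hp2]


/-- Lemma H.11 ('two-angular-integration-lemma'): angular stationary-phase estimate. `Ẽ` is a
rotation-invariant radial energy profile on `[0,R]` with `Ẽ'(0) = 0` and `c₁ ≤ Ẽ'' ≤ c₂`;
then with a constant `c` depending only on `c₁, c₂`, for all `p̄, r > 0` with `p̄ + r ≤ R`,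
`t > 0`, `ε ∈ (0,1]`, and `f` continuous on `[0,π] × [0,2π]` with continuous `∂_θ f`:
`|∫₀^{2π}∫₀^{π} e^{-i Ẽ(√(p̄² - 2p̄r cosθ + r²)) t} f(θ,φ) sinθ dθ dφ|
  ≤ c (ε sup|f| + (1/(p̄ r t ε)) sup(|f| + |∂_θ f|))`. -/
theorem angular_stationary_phase (c₁ c₂ : ℝ) (hc₁ : 0 < c₁) (hc₁₂ : c₁ ≤ c₂) :
    ∃ c : ℝ, 0 < c ∧
      ∀ (R : ℝ), 0 < R → ∀ (E E' E'' : ℝ → ℝ),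
        (∀ u ∈ Set.Icc (0:ℝ) R, HasDerivWithinAt E (E' u) (Set.Icc 0 R) u) →
        (∀ u ∈ Set.Icc (0:ℝ) R, HasDerivWithinAt E' (E'' u) (Set.Icc 0 R) u) →
        ContinuousOn E'' (Set.Icc 0 R) →
        E' 0 = 0 →
        (∀ u ∈ Set.Icc (0:ℝ) R, c₁ ≤ E'' u ∧ E'' u ≤ c₂) →
        ∀ (pb r t ε : ℝ), 0 < pb → 0 < r → pb + r ≤ R → 0 < t → 0 < ε → ε ≤ 1 →
        ∀ (f fθ : ℝ → ℝ → ℂ),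
          ContinuousOn (fun q : ℝ × ℝ => f q.1 q.2)
            (Set.Icc 0 Real.pi ×ˢ Set.Icc 0 (2 * Real.pi)) →
          (∀ θ ∈ Set.Icc (0:ℝ) Real.pi, ∀ φ ∈ Set.Icc (0:ℝ) (2 * Real.pi),
            HasDerivWithinAt (fun θ' => f θ' φ) (fθ θ φ) (Set.Icc 0 Real.pi) θ) →
          ContinuousOn (fun q : ℝ × ℝ => fθ q.1 q.2)
            (Set.Icc 0 Real.pi ×ˢ Set.Icc 0 (2 * Real.pi)) →
        ∀ B₀ B₁ : ℝ,
          (∀ θ ∈ Set.Icc (0:ℝ) Real.pi, ∀ φ ∈ Set.Icc (0:ℝ) (2 * Real.pi),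
            ‖f θ φ‖ ≤ B₀) →
          (∀ θ ∈ Set.Icc (0:ℝ) Real.pi, ∀ φ ∈ Set.Icc (0:ℝ) (2 * Real.pi),
            ‖f θ φ‖ + ‖fθ θ φ‖ ≤ B₁) →
          ‖∫ φ in (0:ℝ)..(2 * Real.pi), ∫ θ in (0:ℝ)..Real.pi,
              Complex.exp (-Complex.I *
                  (E (Real.sqrt (pb ^ 2 - 2 * pb * r * Real.cos θ + r ^ 2)) : ℂ) *
                  (t : ℂ)) * f θ φ * (Real.sin θ : ℂ)‖
            ≤ c * (ε * B₀ + 1 / (pb * r * t * ε) * B₁) := by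
  have hπpos := Real.pi_pos
  have hC₀ : 0 ≤ (6 + 5 * (c₂ - c₁) / c₁) / c₁ := by
    have h := div_nonneg (show (0:ℝ) ≤ 5 * (c₂ - c₁) by linarith) hc₁.le
    exact div_nonneg (by linarith) hc₁.le
  refine ⟨2 * Real.pi * (1 + (6 + 5 * (c₂ - c₁) / c₁) / c₁), ?_, ?_⟩
  · exact mul_pos (by positivity) (by linarith)
  · intro R hR E E' E'' hE hE' hE'' hE'0 hbd pb r t ε hpb hr hpr ht hε hε1
      f fθ hf hfθ hfθc B₀ B₁ hB₀ hB₁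
    have hB₀0 : 0 ≤ B₀ :=
      le_trans (norm_nonneg _) (hB₀ 0 ⟨le_rfl, hπpos.le⟩ 0 ⟨le_rfl, by positivity⟩)
    have hinner : ∀ φ ∈ Set.uIoc (0:ℝ) (2 * Real.pi),
        ‖∫ θ in (0:ℝ)..Real.pi, Complex.exp (-Complex.I *
            (E (Real.sqrt (pb ^ 2 - 2 * pb * r * Real.cos θ + r ^ 2)) : ℂ) * (t : ℂ)) *
            f θ φ * (Real.sin θ : ℂ)‖ ≤
          ε * B₀ + (6 + 5 * (c₂ - c₁) / c₁) / c₁ * (1 / (pb * r * t * ε)) * B₁ := by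
      intro φ hφ
      rw [Set.uIoc_of_le (by positivity)] at hφ
      have hφm : φ ∈ Set.Icc (0:ℝ) (2 * Real.pi) := ⟨hφ.1.le, hφ.2⟩
      exact asp_inner c₁ c₂ hc₁ hc₁₂ R E E' E'' hE hE' hE'' hE'0 hbd pb r t ε
        hpb hr hpr ht hε hε1
        (fun θ => f θ φ) (fun θ => fθ θ φ)
        (fun θ hθ => hfθ θ hθ φ hφm)
        (hfθc.comp ((continuous_id.prodMk continuous_const).continuousOn)
          (fun x hx => ⟨hx, hφm⟩))
        B₀ B₁ (fun θ hθ => hB₀ θ hθ φ hφm) (fun θ hθ => hB₁ θ hθ φ hφm)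
    refine le_trans (intervalIntegral.norm_integral_le_of_norm_le_const hinner) ?_
    rw [sub_zero, abs_of_pos (by positivity : (0:ℝ) < 2 * Real.pi)]
    have hX : 0 ≤ 1 / (pb * r * t * ε) * B₁ := by
      have hB₁0 : 0 ≤ B₁ :=
        le_trans (by positivity) (hB₁ 0 ⟨le_rfl, hπpos.le⟩ 0 ⟨le_rfl, by positivity⟩)
      positivity
    nlinarith [mul_nonneg (mul_nonneg (by positivity : (0:ℝ) ≤ 2 * Real.pi) hC₀)
        (mul_nonneg hε.le hB₀0),
      mul_nonneg (by positivity : (0:ℝ) ≤ 2 * Real.pi) hX]
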